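/- Let X_1 be a real random variable, φ a weight function, G the distribution function of φ(X_1) and Ḡ := 1 − G, and let α: [0,∞) → [0,1/4] be a nonincreasing function with α(t) ≤ C·t^{−ϑ} for all t ≥ 1 and some constants C > 0, ϑ > 0. If 𝔼[φ(X_1)·max(log φ(X_1), 0)] < ∞, then ∫_0^1 log(1 + α^→(s/2)) · Ḡ^→(s) ds < ∞. -/

import Mathlib

open MeasureTheory Filter Set Topology

/-- Distribution function of a random variable. -/
noncomputable def distFun {Ω : Type*} [MeasurableSpace Ω] (P : Measure Ω) (Y : Ω → ℝ) (x : ℝ) : ℝ :=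
  (P {ω | Y ω ≤ x}).toReal

/-- A weight function: continuous, bounded away from 0, and u-shaped. -/
def IsWeightFun (φ : ℝ → ℝ) : Prop :=
  Continuous φ ∧ (∃ ε > 0, ∀ x, ε ≤ φ x) ∧
    ∃ x₀ : ℝ, (∀ x y, x ≤ y → y ≤ x₀ → φ y ≤ φ x) ∧ ∀ x y, x₀ ≤ x → x ≤ y → φ x ≤ φ y

/-- Right-continuous inverse of a nonincreasing function on `[0,∞)`, with `sup ∅ = 0`. -/
noncomputable def rcInv (h : ℝ → ℝ) (y : ℝ) : ℝ :=
  sSup { x : ℝ | 0 ≤ x ∧ y < h x }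

lemma rcInv_nonneg (h : ℝ → ℝ) (y : ℝ) : 0 ≤ rcInv h y :=
  Real.sSup_nonneg fun x hx => hx.1

lemma rcInv_le {h : ℝ → ℝ} {y T : ℝ} (hT : 0 ≤ T)
    (hb : ∀ x, 0 ≤ x → y < h x → x ≤ T) : rcInv h y ≤ T :=
  Real.sSup_le (fun x hx => hb x hx.1 hx.2) hT

lemma rcInv_anti {h : ℝ → ℝ} {y y' T : ℝ} (hb : ∀ x, 0 ≤ x → y < h x → x ≤ T)
    (hyy : y ≤ y') : rcInv h y' ≤ rcInv h y := by
  rcases Set.eq_empty_or_nonempty {x : ℝ | 0 ≤ x ∧ y' < h x} with he | hne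
  · rw [rcInv, he, Real.sSup_empty]; exact rcInv_nonneg h y
  · exact csSup_le_csSup ⟨T, fun x hx => hb x hx.1 hx.2⟩ hne
      fun x hx => ⟨hx.1, lt_of_le_of_lt hyy hx.2⟩

lemma young_log {a b : ℝ} (ha : 0 ≤ a) (hb : 0 ≤ b) :
    a * b ≤ a * max (Real.log a) 0 + Real.exp b := by
  rcases le_or_gt a 1 with h1 | h1
  · have h2 : a * b ≤ b := by nlinarith
    have h3 : b ≤ Real.exp b := (le_add_of_nonneg_right zero_le_one).trans (Real.add_one_le_exp b)
    have h4 : 0 ≤ a * max (Real.log a) 0 := mul_nonneg ha (le_max_right _ _)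
    linarith
  · have ha0 : 0 < a := lt_trans one_pos h1
    have hla : 0 ≤ Real.log a := Real.log_nonneg h1.le
    rw [max_eq_left hla]
    have hu : (b - Real.log a) ≤ Real.exp (b - Real.log a) :=
      (le_add_of_nonneg_right zero_le_one).trans (Real.add_one_le_exp _)
    have h2 : a * (b - Real.log a) ≤ a * Real.exp (b - Real.log a) :=
      mul_le_mul_of_nonneg_left hu ha
    rw [Real.exp_sub, Real.exp_log ha0] at h2
    have h3 : a * (Real.exp b / a) = Real.exp b := mul_div_cancel₀ _ (ne_of_gt ha0)
    nlinarith

/-- If `E[φ(X₁) log⁺ φ(X₁)] < ∞` and the nonincreasing function `α : [0,∞) → [0,1/4]`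
satisfies `α(t) ≤ C t^{-ϑ}` for `t ≥ 1` (some `C, ϑ > 0`), then
`∫_0^1 log(1 + α^→(s/2)) Ḡ^→(s) ds < ∞`, where `G` is the df of `φ(X₁)`. -/
theorem integrability_condition_of_LlogL
    {Ω : Type*} [MeasurableSpace Ω] (P : Measure Ω) [IsProbabilityMeasure P]
    (X : Ω → ℝ) (hmeas : Measurable X)
    (φ : ℝ → ℝ) (hφ : IsWeightFun φ)
    (α : ℝ → ℝ) (hα_mono : ∀ s t : ℝ, 0 ≤ s → s ≤ t → α t ≤ α s)
    (hα_range : ∀ t : ℝ, 0 ≤ t → α t ∈ Set.Icc (0 : ℝ) (1 / 4))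
    (C ϑ : ℝ) (hC : 0 < C) (hϑ : 0 < ϑ)
    (hα_bound : ∀ t : ℝ, 1 ≤ t → α t ≤ C * t ^ (-ϑ))
    (hLlogL : Integrable (fun ω => φ (X ω) * max (Real.log (φ (X ω))) 0) P) :
    IntegrableOn
      (fun s => Real.log (1 + rcInv α (s / 2)) *
        rcInv (fun x => 1 - distFun P (fun ω => φ (X ω)) x) s)
      (Set.Ioo (0 : ℝ) 1) := by
  obtain ⟨hφc, ⟨ε, hε, hφε⟩, -⟩ := hφ
  set Y : Ω → ℝ := fun ω => φ (X ω) with hYdef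
  have hYm : Measurable Y := hφc.measurable.comp hmeas
  set Gb : ℝ → ℝ := fun x => 1 - distFun P Y x with hGbdef
  set q : ℝ → ℝ := fun s => rcInv Gb s with hqdef
  -- basic facts about Gb
  have hG01 : ∀ x : ℝ, 0 ≤ distFun P Y x ∧ distFun P Y x ≤ 1 := by
    intro x
    constructor
    · exact ENNReal.toReal_nonneg
    · have : P {ω | Y ω ≤ x} ≤ 1 := prob_le_one
      simpa [distFun] using ENNReal.toReal_mono ENNReal.one_ne_top this
  have hGbanti : Antitone Gb := by
    intro x y hxy
    have : P {ω | Y ω ≤ x} ≤ P {ω | Y ω ≤ y} :=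
      measure_mono fun ω hω => le_trans hω hxy
    have := ENNReal.toReal_mono (measure_ne_top P _) this
    simp only [hGbdef, distFun]
    linarith
  have hGbsmall : ∀ s : ℝ, 0 < s → ∃ M : ℝ, 0 ≤ M ∧ Gb M ≤ s := by
    intro s hs
    rcases le_or_gt 1 s with h1 | h1
    · refine ⟨0, le_refl 0, ?_⟩
      have := (hG01 0).1
      simp only [hGbdef]
      linarith
    · have hmono : Monotone (fun n : ℕ => {ω | Y ω ≤ (n : ℝ)}) := by
        intro m n hmn ω hω
        exact le_trans hω (by exact_mod_cast hmn : (m : ℝ) ≤ (n : ℝ))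
      have hunion : (⋃ n : ℕ, {ω | Y ω ≤ (n : ℝ)}) = univ := by
        ext ω
        simp only [mem_iUnion, mem_setOf_eq, mem_univ, iff_true]
        exact exists_nat_ge (Y ω)
      have ht := tendsto_measure_iUnion_atTop (μ := P) hmono
      rw [hunion, measure_univ] at ht
      have hlt : ENNReal.ofReal (1 - s) < 1 := by
        rw [← ENNReal.ofReal_one]
        exact ENNReal.ofReal_lt_ofReal_iff one_pos |>.mpr (by linarith)
      have hev := ht.eventually (eventually_gt_nhds hlt)
      obtain ⟨n, hn⟩ := hev.exists
      have h2 := ENNReal.toReal_mono (measure_ne_top P _) hn.le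
      rw [ENNReal.toReal_ofReal (by linarith)] at h2
      refine ⟨(n : ℝ), Nat.cast_nonneg n, ?_⟩
      simp only [hGbdef, distFun]
      exact sub_le_iff_le_add.mpr (by simp only [Function.comp] at h2 ⊢; linarith)
  have hqbdd : ∀ s : ℝ, 0 < s → ∃ M, 0 ≤ M ∧ ∀ x, 0 ≤ x → s < Gb x → x ≤ M := by
    intro s hs
    obtain ⟨M, hM0, hMs⟩ := hGbsmall s hs
    refine ⟨M, hM0, fun x hx hsx => ?_⟩
    by_contra hlt
    push_neg at hlt
    exact absurd hsx (not_lt.2 ((hGbanti hlt.le).trans hMs))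
  have hqnn : ∀ s, 0 ≤ q s := fun s => rcInv_nonneg Gb s
  have hqanti : AntitoneOn q (Ioo (0 : ℝ) 1) := by
    intro s hs t ht hst
    obtain ⟨M, hM0, hb⟩ := hqbdd s hs.1
    exact rcInv_anti hb hst
  -- key equivalence
  have hkey : ∀ x : ℝ, 0 ≤ x → ∀ s : ℝ, s ∈ Ioo (0:ℝ) 1 → (q s ≤ x ↔ Gb x ≤ s) := by
    intro x hx s hs
    constructor
    · intro hqs
      by_contra hsx
      push_neg at hsx
      have hBanti : Antitone (fun n : ℕ => {ω | Y ω ≤ x + 1/((n:ℝ)+1)}) := by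
        intro m n hmn ω hω
        simp only [mem_setOf_eq] at hω ⊢
        refine le_trans hω ?_
        have h1 : (1:ℝ)/((n:ℝ)+1) ≤ 1/((m:ℝ)+1) := by
          apply one_div_le_one_div_of_le (by positivity)
          have : (m:ℝ) ≤ (n:ℝ) := by exact_mod_cast hmn
          linarith
        linarith
      have hInter : (⋂ n : ℕ, Y ⁻¹' Iic (x + 1/((n:ℝ)+1))) = Y ⁻¹' Iic x := by
        ext ω
        simp only [mem_iInter, mem_preimage, mem_Iic]
        constructor
        · intro h
          by_contra hc
          push_neg at hc
          obtain ⟨n, hn⟩ := exists_nat_one_div_lt (by linarith : 0 < Y ω - x)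
          have := h n
          linarith
        · intro h n
          have : (0:ℝ) < 1/((n:ℝ)+1) := by positivity
          linarith
      have ht := tendsto_measure_iInter_atTop (μ := P)
        (fun n => (hYm measurableSet_Iic).nullMeasurableSet) hBanti ⟨0, measure_ne_top P _⟩
      rw [hInter] at ht
      have ht' := (ENNReal.tendsto_toReal (measure_ne_top P _)).comp ht
      have ht2 : Tendsto (fun n : ℕ => Gb (x + 1/((n:ℝ)+1))) atTop (𝓝 (Gb x)) := by
        have h1 : Tendsto (fun n : ℕ => distFun P Y (x + 1/((n:ℝ)+1))) atTop
            (𝓝 (distFun P Y x)) := ht'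
        have h2 := (tendsto_const_nhds : Tendsto (fun _ : ℕ => (1:ℝ)) atTop (𝓝 1)).sub h1
        simpa only [hGbdef] using h2
      have hev := ht2.eventually (eventually_gt_nhds hsx)
      obtain ⟨n, hn⟩ := hev.exists
      have hmem : x + 1/((n:ℝ)+1) ∈ {z : ℝ | 0 ≤ z ∧ s < Gb z} := ⟨by positivity, hn⟩
      obtain ⟨M, hM0, hb⟩ := hqbdd s hs.1
      have hle : x + 1/((n:ℝ)+1) ≤ q s := le_csSup ⟨M, fun z hz => hb z hz.1 hz.2⟩ hmem
      have hpos : (0:ℝ) < 1/((n:ℝ)+1) := by positivity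
      linarith
    · intro hGbs
      refine rcInv_le hx fun z hz hsz => ?_
      by_contra hzx
      push_neg at hzx
      exact absurd hsz (not_lt.2 ((hGbanti hzx.le).trans hGbs))
  -- the quantile function pushes Lebesgue on (0,1) to the law of Y
  have hqaem : AEMeasurable q ((volume : Measure ℝ).restrict (Ioo (0:ℝ) 1)) :=
    aemeasurable_restrict_of_antitoneOn measurableSet_Ioo hqanti
  have hmap : Measure.map q ((volume : Measure ℝ).restrict (Ioo (0:ℝ) 1)) = Measure.map Y P := by
    have hfin : IsFiniteMeasure (Measure.map q ((volume : Measure ℝ).restrict (Ioo (0:ℝ) 1))) := by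
      constructor
      rw [Measure.map_apply_of_aemeasurable hqaem MeasurableSet.univ]
      simp [Real.volume_Ioo]
    have hfin2 : IsFiniteMeasure (Measure.map Y P) := by
      constructor
      rw [Measure.map_apply hYm MeasurableSet.univ]
      simp
    refine MeasureTheory.Measure.ext_of_Iic _ _ fun a => ?_
    rw [Measure.map_apply_of_aemeasurable hqaem measurableSet_Iic,
        Measure.map_apply hYm measurableSet_Iic,
        Measure.restrict_apply' measurableSet_Ioo]
    rcases lt_or_ge a 0 with ha | ha
    · have h1 : q ⁻¹' Iic a ∩ Ioo 0 1 = (∅ : Set ℝ) := by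
        ext s
        simp only [mem_inter_iff, mem_preimage, mem_Iic, mem_empty_iff_false, iff_false, not_and]
        intro h1
        exact absurd (le_trans (hqnn s) h1) (not_le.2 ha)
      have h2 : Y ⁻¹' Iic a = (∅ : Set Ω) := by
        ext ω
        simp only [mem_preimage, mem_Iic, mem_empty_iff_false, iff_false]
        intro h
        have := hφε (X ω)
        simp only [hYdef] at h
        linarith
      rw [h1, h2, measure_empty, measure_empty]
    · have hset : q ⁻¹' Iic a ∩ Ioo 0 1 = Ici (Gb a) ∩ Ioo 0 1 := by
        ext s
        simp only [mem_inter_iff, mem_preimage, mem_Iic, mem_Ici, and_congr_left_iff]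
        intro hs
        rw [hkey a ha s hs]
      rw [hset]
      have hGa0 : 0 ≤ Gb a := by
        have := (hG01 a).2
        simp only [hGbdef]
        linarith
      have hYP : P (Y ⁻¹' Iic a) = ENNReal.ofReal (1 - Gb a) := by
        simp only [hGbdef]
        rw [sub_sub_cancel, distFun, ENNReal.ofReal_toReal (measure_ne_top P _)]
        rfl
      rw [hYP]
      rcases eq_or_lt_of_le hGa0 with h0 | h0
      · rw [← h0]
        have he : Ici (0:ℝ) ∩ Ioo 0 1 = Ioo (0:ℝ) 1 :=
          inter_eq_self_of_subset_right fun s hs => le_of_lt hs.1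
        rw [he, Real.volume_Ioo]
      · have he : Ici (Gb a) ∩ Ioo 0 1 = Ico (Gb a) 1 := by
          ext s
          simp only [mem_inter_iff, mem_Ici, mem_Ioo, mem_Ico]
          exact ⟨fun ⟨h1, _, h3⟩ => ⟨h1, h3⟩, fun ⟨h1, h2⟩ => ⟨h1, lt_of_lt_of_le h0 h1, h2⟩⟩
        rw [he, Real.volume_Ico]
  -- integrability of q log⁺ q on (0,1)
  have hgm : Measurable fun t : ℝ => t * max (Real.log t) 0 :=
    measurable_id.mul (Real.measurable_log.max measurable_const)
  have hIntY : Integrable (fun t : ℝ => t * max (Real.log t) 0) (Measure.map Y P) := by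
    rw [integrable_map_measure hgm.aestronglyMeasurable hYm.aemeasurable]
    exact hLlogL
  have hInt1 : Integrable (fun s => q s * max (Real.log (q s)) 0)
      ((volume : Measure ℝ).restrict (Ioo (0:ℝ) 1)) := by
    rw [← hmap] at hIntY
    exact (integrable_map_measure hgm.aestronglyMeasurable hqaem).mp hIntY
  have hInt2 : IntegrableOn (fun s : ℝ => s ^ (-(1/2) : ℝ)) (Ioo (0:ℝ) 1) := by
    have h := intervalIntegral.intervalIntegrable_rpow' (a := 0) (b := 1) (r := -(1/2)) (by norm_num)
    exact h.1.mono_set Ioo_subset_Ioc_self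
  -- bound on the rcInv α term
  have halpha_bdd : ∀ y : ℝ, 0 < y → ∀ x : ℝ, 0 ≤ x → y < α x →
      x ≤ max 1 ((C/y) ^ (1/ϑ : ℝ)) := by
    intro y hy x hx hyx
    by_contra hxT
    push_neg at hxT
    have hx1 : 1 < x := lt_of_le_of_lt (le_max_left _ _) hxT
    have hx0 : (0:ℝ) < x := lt_trans one_pos hx1
    have hCy : 0 < C / y := div_pos hC hy
    have hxz : (C/y) ^ (1/ϑ : ℝ) < x := lt_of_le_of_lt (le_max_right _ _) hxT
    have hxϑ : C / y < x ^ ϑ := by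
      have h := Real.rpow_lt_rpow (Real.rpow_nonneg hCy.le _) hxz hϑ
      rwa [← Real.rpow_mul hCy.le, one_div, inv_mul_cancel₀ (ne_of_gt hϑ), Real.rpow_one] at h
    have hxϑ0 : 0 < x ^ ϑ := Real.rpow_pos_of_pos hx0 ϑ
    have hb := hα_bound x hx1.le
    rw [Real.rpow_neg hx0.le, ← div_eq_mul_inv] at hb
    have h2 : C / x ^ ϑ < y := by
      rw [div_lt_iff₀ hxϑ0]
      rw [div_lt_iff₀ hy] at hxϑ
      nlinarith
    linarith
  set A : ℝ := Real.log 2 + (1/ϑ) * max (Real.log (2*C)) 0 with hAdef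
  have hA0 : 0 ≤ A := add_nonneg (Real.log_nonneg one_le_two)
    (mul_nonneg (by positivity) (le_max_right _ _))
  have hwb : ∀ s : ℝ, s ∈ Ioo (0:ℝ) 1 →
      Real.log (1 + rcInv α (s/2)) ≤ A + (1/ϑ) * Real.log (1/s) := by
    intro s hs
    have hs0 := hs.1
    have hy : 0 < s/2 := by linarith
    have hCy : C / (s/2) = 2*C/s := by ring
    have hz0 : 0 < 2*C/s := by positivity
    have hT1 : (1:ℝ) ≤ max 1 ((2*C/s) ^ (1/ϑ : ℝ)) := le_max_left _ _
    have hrc : rcInv α (s/2) ≤ max 1 ((2*C/s) ^ (1/ϑ : ℝ)) := by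
      refine rcInv_le (by linarith) fun x hx hyx => ?_
      have h := halpha_bdd (s/2) hy x hx hyx
      rwa [hCy] at h
    have hrc0 := rcInv_nonneg α (s/2)
    have hlog1 : Real.log (1 + rcInv α (s/2)) ≤
        Real.log (2 * max 1 ((2*C/s) ^ (1/ϑ : ℝ))) := by
      apply Real.log_le_log (by linarith)
      linarith
    have hlog2 : Real.log (2 * max 1 ((2*C/s) ^ (1/ϑ : ℝ))) =
        Real.log 2 + Real.log (max 1 ((2*C/s) ^ (1/ϑ : ℝ))) :=
      Real.log_mul two_ne_zero (by positivity)
    have hls : 0 ≤ Real.log (1/s) := by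
      apply Real.log_nonneg
      rw [le_div_iff₀ hs0]
      linarith [hs.2]
    have hlog3 : Real.log (max 1 ((2*C/s) ^ (1/ϑ : ℝ))) ≤
        (1/ϑ) * (max (Real.log (2*C)) 0 + Real.log (1/s)) := by
      rcases le_or_gt ((2*C/s) ^ (1/ϑ : ℝ)) 1 with hz1 | hz1
      · rw [max_eq_left hz1, Real.log_one]
        have h1 : (0:ℝ) ≤ max (Real.log (2*C)) 0 := le_max_right _ _
        have h2 : (0:ℝ) < 1/ϑ := by positivity
        nlinarith
      · rw [max_eq_right hz1.le, Real.log_rpow hz0]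
        have hsplit : Real.log (2*C/s) = Real.log (2*C) + Real.log (1/s) := by
          rw [div_eq_mul_inv, Real.log_mul (by positivity) (by positivity),
            one_div, Real.log_inv]
        rw [hsplit]
        have h1 := le_max_left (Real.log (2*C)) 0
        apply mul_le_mul_of_nonneg_left _ (by positivity : (0:ℝ) ≤ 1/ϑ)
        linarith
    calc Real.log (1 + rcInv α (s/2))
        ≤ Real.log 2 + Real.log (max 1 ((2*C/s) ^ (1/ϑ : ℝ))) := by rw [← hlog2]; exact hlog1
      _ ≤ Real.log 2 + (1/ϑ) * (max (Real.log (2*C)) 0 + Real.log (1/s)) := by linarith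
      _ = A + (1/ϑ) * Real.log (1/s) := by rw [hAdef]; ring
  -- final assembly
  set K : ℝ := 2/ϑ with hKdef
  have hK0 : 0 < K := by positivity
  have hmaj : Integrable (fun s : ℝ => K * (q s * max (Real.log (q s)) 0)
      + (K * Real.exp (A/K)) * s ^ (-(1/2) : ℝ)) ((volume : Measure ℝ).restrict (Ioo (0:ℝ) 1)) :=
    (hInt1.const_mul K).add (hInt2.const_mul _)
  show Integrable (fun s => Real.log (1 + rcInv α (s / 2)) * q s)
      ((volume : Measure ℝ).restrict (Ioo (0:ℝ) 1))
  apply Integrable.mono' hmaj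
  · have hfanti : AntitoneOn (fun s => Real.log (1 + rcInv α (s/2)) * q s) (Ioo (0:ℝ) 1) := by
      intro s hs t ht hst
      have hrc0s := rcInv_nonneg α (s/2)
      have hrc0t := rcInv_nonneg α (t/2)
      have h1 : rcInv α (t/2) ≤ rcInv α (s/2) :=
        rcInv_anti (fun x hx h => halpha_bdd (s/2) (by linarith [hs.1]) x hx h) (by linarith)
      have h2 : 0 ≤ Real.log (1 + rcInv α (s/2)) := Real.log_nonneg (by linarith)
      have h3 : Real.log (1 + rcInv α (t/2)) ≤ Real.log (1 + rcInv α (s/2)) :=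
        Real.log_le_log (by linarith) (by linarith)
      exact mul_le_mul h3 (hqanti hs ht hst) (hqnn t) h2
    exact (aemeasurable_restrict_of_antitoneOn measurableSet_Ioo hfanti).aestronglyMeasurable
  · filter_upwards [ae_restrict_mem measurableSet_Ioo] with s hs
    have hs0 := hs.1
    have hlogs : 0 ≤ Real.log (1/s) := by
      apply Real.log_nonneg
      rw [le_div_iff₀ hs0]
      linarith [hs.2]
    set w : ℝ := A + (1/ϑ) * Real.log (1/s) with hwdef
    have hw0 : 0 ≤ w := add_nonneg hA0 (mul_nonneg (by positivity) hlogs)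
    have hL0 : 0 ≤ Real.log (1 + rcInv α (s/2)) :=
      Real.log_nonneg (by linarith [rcInv_nonneg α (s/2)])
    have hfnn : 0 ≤ Real.log (1 + rcInv α (s/2)) * q s := mul_nonneg hL0 (hqnn s)
    rw [Real.norm_eq_abs, abs_of_nonneg hfnn]
    have step1 : Real.log (1 + rcInv α (s/2)) * q s ≤ w * q s :=
      mul_le_mul_of_nonneg_right (hwb s hs) (hqnn s)
    have hyoung : q s * (w/K) ≤ q s * max (Real.log (q s)) 0 + Real.exp (w/K) :=
      young_log (hqnn s) (div_nonneg hw0 hK0.le)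
    have hexp : Real.exp (w/K) = Real.exp (A/K) * s ^ (-(1/2) : ℝ) := by
      have hwK : w/K = A/K + (1/2) * Real.log (1/s) := by
        rw [hwdef, hKdef]
        field_simp
        try ring
      rw [hwK, Real.exp_add]
      congr 1
      rw [mul_comm, ← Real.rpow_def_of_pos (by positivity : (0:ℝ) < 1/s),
        one_div, Real.inv_rpow hs0.le, ← Real.rpow_neg hs0.le]
    calc Real.log (1 + rcInv α (s/2)) * q s ≤ w * q s := step1
      _ = K * (q s * (w/K)) := by
          rw [mul_comm K, mul_assoc, div_mul_cancel₀ _ hK0.ne', mul_comm]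
      _ ≤ K * (q s * max (Real.log (q s)) 0 + Real.exp (w/K)) :=
          mul_le_mul_of_nonneg_left hyoung hK0.le
      _ = K * (q s * max (Real.log (q s)) 0) + (K * Real.exp (A/K)) * s ^ (-(1/2) : ℝ) := by
          rw [hexp]; ring
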